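/- Let λ, μ > 0 and let B be a real 2×2 matrix with eigenvalues −μ and λ. Let v₁ ∈ ℝ² be a unit vector with B v₁ = −μ v₁, and let v₂' ∈ (ℝ²)* be a left eigenvector with v₂' B = λ v₂', so that v₂' v₁ = 0. Let p ∈ ℕ, r > 0, and for x ∈ ℝ² let a(x) = (1/3)·2^{−2p}·diag(x₁², x₂²). Set x_s = r e^{−μs} v₁. Then ∫₀^∞ e^{−2λs} v₂' a(x_s) (v₂')ᵀ ds = (1/(3(λ+μ))) · 2^{−2p} · r² · (v₁,₁ v₂,₁')², where v₁,₁ is the first component of v₁ and v₂,₁' is the first component of v₂'. -/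

import Mathlib

open Matrix MeasureTheory

theorem stmt7 (lam mu : ℝ) (hlam : 0 < lam) (hmu : 0 < mu)
    (B : Matrix (Fin 2) (Fin 2) ℝ)
    (v1 : Fin 2 → ℝ) (hv1unit : v1 0 ^ 2 + v1 1 ^ 2 = 1)
    (hv1 : B.mulVec v1 = (-mu) • v1)
    (v2' : Fin 2 → ℝ) (hv2' : Matrix.vecMul v2' B = lam • v2')
    (p : ℕ) (r : ℝ) (hr : 0 < r)
    (a : (Fin 2 → ℝ) → Matrix (Fin 2) (Fin 2) ℝ)
    (ha : ∀ v, a v = ((1 : ℝ) / 3 * 2 ^ (-(2 * p : ℤ))) • Matrix.diagonal (fun i => v i ^ 2))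
    (x : ℝ → Fin 2 → ℝ) (hx : ∀ s, x s = (r * Real.exp (-mu * s)) • v1) :
    ∫ s in Set.Ioi (0 : ℝ), Real.exp (-2 * lam * s) * (v2' ⬝ᵥ (a (x s)).mulVec v2') =
      1 / (3 * (lam + mu)) * 2 ^ (-(2 * p : ℤ)) * r ^ 2 * (v1 0 * v2' 0) ^ 2 := by
  -- orthogonality
  have horth : v2' 0 * v1 0 + v2' 1 * v1 1 = 0 := by
    have h1 : Matrix.vecMul v2' B ⬝ᵥ v1 = v2' ⬝ᵥ B.mulVec v1 := by
      rw [Matrix.dotProduct_mulVec]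
    rw [hv2', hv1] at h1
    simp [dotProduct, Fin.sum_univ_two] at h1
    have h2 : (lam + mu) * (v2' 0 * v1 0 + v2' 1 * v1 1) = 0 := by nlinarith [h1]
    have hne : lam + mu ≠ 0 := by positivity
    rcases mul_eq_zero.mp h2 with h | h
    · exact absurd h hne
    · exact h
  have h11 : v1 1 * v2' 1 = -(v1 0 * v2' 0) := by linarith [horth]
  set c : ℝ := (1 : ℝ) / 3 * 2 ^ (-(2 * p : ℤ)) with hc
  set C : ℝ := c * r ^ 2 * (2 * (v1 0 * v2' 0) ^ 2) with hC
  have hpt : ∀ s : ℝ, Real.exp (-2 * lam * s) * (v2' ⬝ᵥ (a (x s)).mulVec v2')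
      = C * Real.exp (-(2 * (lam + mu)) * s) := by
    intro s
    have hexp : Real.exp (-(2 * lam * s)) * Real.exp (-(mu * s)) ^ 2
        = Real.exp (-(2 * (lam + mu) * s)) := by
      rw [sq, ← Real.exp_add, ← Real.exp_add]; ring_nf
    rw [ha, hx]
    simp [Matrix.mulVec, dotProduct, Fin.sum_univ_two, Matrix.diagonal,
      Matrix.of_apply, Pi.smul_apply, smul_eq_mul]
    have : ((r * Real.exp (-(mu*s))) * v1 1) ^ 2 * v2' 1 ^ 2
        = ((r * Real.exp (-(mu*s)))) ^ 2 * (v1 0 * v2' 0) ^ 2 := by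
      have : ((r * Real.exp (-(mu*s))) * v1 1 * v2' 1) ^ 2
          = ((r * Real.exp (-(mu*s))) * (v1 0 * v2' 0)) ^ 2 := by
        rw [mul_assoc, h11]; ring
      nlinarith [this]
    rw [hC]
    linear_combination Real.exp (-(2 * lam * s)) * c * this +
      (c * r ^ 2 * (2 * (v1 0 * v2' 0) ^ 2)) * hexp
  rw [MeasureTheory.setIntegral_congr_fun measurableSet_Ioi (fun s _ => hpt s)]
  rw [MeasureTheory.integral_const_mul]
  have hb : (0:ℝ) < 2 * (lam + mu) := by positivity
  have hint : ∫ s in Set.Ioi (0:ℝ), Real.exp (-(2 * (lam + mu)) * s)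
      = (2 * (lam + mu))⁻¹ := by
    have := integral_comp_mul_left_Ioi (fun u => Real.exp (-u)) 0 hb
    simp only [mul_zero, smul_eq_mul] at this
    rw [show (fun x => Real.exp (-(2*(lam+mu)) * x)) = fun x => Real.exp (-(2*(lam+mu) * x)) by
      funext x; ring_nf]
    rw [this, integral_exp_neg_Ioi_zero, mul_one]
  rw [hint, hC, hc]
  field_simp
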